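/- Let T_m ∈ ℂ^{m×m} be an unreduced tridiagonal matrix with eigenvalues λ_1, ..., λ_m, let f be analytic in a neighborhood of its spectrum, and write f(T_m) = Σ_{i=0}^{m−1} a_i T_m^i for the interpolating polynomial representation. Then the (m,1) entry of f(T_m) equals a_{m−1} times the (m,1) entry of T_m^{m−1}; in particular e_m^T f(T_m) e_1 = f[λ_1, ..., λ_m] · ∏_{j=1}^{m−1} t_{j+1,j}, where f[λ_1,...,λ_m] is the divided difference of f at the eigenvalues. -/

import Mathlib

open MeasureTheory Matrix Polynomial

/-- Divided difference in the Hermite sense, via the Hermite–Genocchi formula. -/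
noncomputable def divDiff (f : ℂ → ℂ) (k : ℕ) (z : Fin (k + 1) → ℂ) : ℂ :=
  ∫ t in {t : Fin k → ℝ | (∀ i, 0 ≤ t i) ∧ ∑ i, t i ≤ 1},
    iteratedDeriv k f (z 0 + ∑ i, (t i : ℂ) * (z i.succ - z 0))

/-- for an unreduced tridiagonal matrix `T` of order `m = k+1` with
eigenvalues `λ_1,…,λ_m` and `f(T) = Σ_{i=0}^{m−1} a_i T^i` the interpolating-polynomial
representation of the matrix function, the `(m,1)` entry of `f(T)` equals
`a_{m−1}` times the `(m,1)` entry of `T^{m−1}`, and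
`e_mᵀ f(T) e_1 = f[λ_1,…,λ_m] · ∏_j t_{j+1,j}`. -/

lemma band0 {k : ℕ} (T : Matrix (Fin (k + 1)) (Fin (k + 1)) ℂ) (htri : ∀ i j : Fin (k + 1), ((j : ℕ) + 1 < (i : ℕ) ∨ (i : ℕ) + 1 < (j : ℕ)) → T i j = 0) :
    ∀ (n : ℕ) (i j : Fin (k + 1)), (j : ℕ) + n < (i : ℕ) → (T ^ n) i j = 0 := by
  intro n
  induction n with
  | zero =>
    intro i j h
    rw [pow_zero, Matrix.one_apply_ne]
    intro hij; subst hij; omega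
  | succ n ih =>
    intro i j h
    rw [pow_succ, Matrix.mul_apply]
    apply Finset.sum_eq_zero
    intro l _
    by_cases hl : (l : ℕ) + n < (i : ℕ)
    · rw [ih i l hl, zero_mul]
    · rw [htri l j (Or.inl (by omega)), mul_zero]

lemma bandProd {k : ℕ} (T : Matrix (Fin (k + 1)) (Fin (k + 1)) ℂ) (htri : ∀ i j : Fin (k + 1), ((j : ℕ) + 1 < (i : ℕ) ∨ (i : ℕ) + 1 < (j : ℕ)) → T i j = 0) :
    ∀ (n : ℕ) (j : Fin (k + 1)) (h : (j : ℕ) + n ≤ k),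
      (T ^ n) ⟨(j : ℕ) + n, by omega⟩ j =
        ∏ m : Fin n, T ⟨(j : ℕ) + (m : ℕ) + 1, by have := m.2; omega⟩
          ⟨(j : ℕ) + (m : ℕ), by have := m.2; omega⟩ := by
  intro n
  induction n with
  | zero =>
    intro j h
    simp [pow_zero, Matrix.one_apply, Fin.ext_iff]
  | succ n ih =>
    intro j h
    rw [pow_succ', Matrix.mul_apply]
    have key : ∀ l : Fin (k + 1), l ≠ ⟨(j : ℕ) + n, by omega⟩ →
        T ⟨(j : ℕ) + (n + 1), by omega⟩ l * (T ^ n) l j = 0 := by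
      intro l hl
      by_cases h1 : (j : ℕ) + n < (l : ℕ)
      · rw [band0 T htri n l j h1, mul_zero]
      · have : (l : ℕ) < (j : ℕ) + n := by
          rcases lt_or_eq_of_le (not_lt.mp h1) with h2 | h2
          · exact h2
          · exact absurd (Fin.ext h2) hl
        rw [htri _ _ (Or.inl (by simp only [Fin.val_mk]; omega)), zero_mul]
    rw [Finset.sum_eq_single (⟨(j : ℕ) + n, by omega⟩ : Fin (k + 1))
      (fun l _ hl => key l hl) (by intro h'; exact absurd (Finset.mem_univ _) h')]
    rw [ih j (by omega), mul_comm, Fin.prod_univ_castSucc]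
    rfl


def SimpSet (k : ℕ) : Set (Fin k → ℝ) := {t | (∀ i, 0 ≤ t i) ∧ ∑ i, t i ≤ 1}

lemma simpSet_closed (k : ℕ) : IsClosed (SimpSet k) := by
  have : SimpSet k = (⋂ i, {t : Fin k → ℝ | 0 ≤ t i}) ∩ {t | ∑ i, t i ≤ 1} := by
    ext t; simp [SimpSet]
  rw [this]
  exact IsClosed.inter (isClosed_iInter fun i =>
      isClosed_le continuous_const (continuous_apply i))
    (isClosed_le (continuous_finset_sum _ fun i _ => continuous_apply i) continuous_const)

lemma simpSet_subset_box (k : ℕ) : SimpSet k ⊆ Set.pi Set.univ (fun _ : Fin k => Set.Icc (0:ℝ) 1) := by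
  intro t ht i _
  refine ⟨ht.1 i, le_trans ?_ ht.2⟩
  exact Finset.single_le_sum (fun i _ => ht.1 i) (Finset.mem_univ i)

lemma simpSet_compact (k : ℕ) : IsCompact (SimpSet k) :=
  (isCompact_univ_pi fun _ => isCompact_Icc).of_isClosed_subset (simpSet_closed k)
    (simpSet_subset_box k)

lemma simpSet_meas (k : ℕ) : MeasurableSet (SimpSet k) := (simpSet_closed k).measurableSet

lemma mem_simpSet_insertNth {k : ℕ} (j : Fin (k + 1)) (s : ℝ) (u : Fin k → ℝ) :
    j.insertNth s u ∈ SimpSet (k + 1) ↔ u ∈ SimpSet k ∧ s ∈ Set.Icc (0:ℝ) (1 - ∑ i, u i) := by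
  have hsum : ∑ i, j.insertNth s u i = s + ∑ i, u i := by
    rw [Fin.sum_univ_succAbove _ j]
    simp
  constructor
  · rintro ⟨h1, h2⟩
    rw [hsum] at h2
    have hs : 0 ≤ s := by simpa using h1 j
    have hu : ∀ i, 0 ≤ u i := fun i => by simpa using h1 (j.succAbove i)
    have hsu : 0 ≤ ∑ i, u i := Finset.sum_nonneg fun i _ => hu i
    exact ⟨⟨hu, by linarith⟩, ⟨hs, by linarith⟩⟩
  · rintro ⟨⟨hu, _⟩, hs1, hs2⟩
    refine ⟨?_, ?_⟩
    · intro i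
      rcases eq_or_ne i j with rfl | h
      · simpa using hs1
      · obtain ⟨i', rfl⟩ := Fin.exists_succAbove_eq h
        simpa using hu i'
    · rw [hsum]; linarith

lemma simplex_slice {E : Type*} [NormedAddCommGroup E] [NormedSpace ℝ E] [CompleteSpace E]
    {k : ℕ} (j : Fin (k + 1)) (F : (Fin (k + 1) → ℝ) → E)
    (hF : IntegrableOn F (SimpSet (k + 1))) :
    ∫ t in SimpSet (k + 1), F t =
      ∫ u in SimpSet k, ∫ s in Set.Icc (0:ℝ) (1 - ∑ i, u i), F (j.insertNth s u) := by
  set e : ℝ × (Fin k → ℝ) ≃ᵐ (Fin (k + 1) → ℝ) :=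
    (MeasurableEquiv.piFinSuccAbove (fun _ => ℝ) j).symm with he_def
  have hem : MeasurePreserving e := (volume_preserving_piFinSuccAbove (fun _ : Fin (k+1) => ℝ) j).symm _
  have he : ∀ s u, e (s, u) = j.insertNth s u := fun s u => rfl
  have hind : Integrable (Set.indicator (SimpSet (k + 1)) F) volume :=
    (integrable_indicator_iff (simpSet_meas (k + 1))).mpr hF
  have hint2 : Integrable (fun p : ℝ × (Fin k → ℝ) => Set.indicator (SimpSet (k + 1)) F (e p)) volume :=
    (hem.integrable_comp_emb e.measurableEmbedding).mpr hind
  calc ∫ t in SimpSet (k + 1), F t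
      = ∫ t, Set.indicator (SimpSet (k + 1)) F t := (integral_indicator (simpSet_meas _)).symm
    _ = ∫ p, Set.indicator (SimpSet (k + 1)) F (e p) := (hem.integral_comp e.measurableEmbedding _).symm
    _ = ∫ s, ∫ u, Set.indicator (SimpSet (k + 1)) F (e (s, u)) := by
        rw [Measure.volume_eq_prod] at hint2
        exact integral_prod _ hint2
    _ = ∫ u, ∫ s, Set.indicator (SimpSet (k + 1)) F (e (s, u)) := by
        rw [Measure.volume_eq_prod] at hint2
        exact integral_integral_swap hint2
    _ = ∫ u, Set.indicator (SimpSet k)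
          (fun u => ∫ s in Set.Icc (0:ℝ) (1 - ∑ i, u i), F (j.insertNth s u)) u := by
        refine integral_congr_ae (Filter.Eventually.of_forall fun u => ?_)
        by_cases hu : u ∈ SimpSet k
        · rw [Set.indicator_of_mem hu, ← integral_indicator measurableSet_Icc]
          refine integral_congr_ae (Filter.Eventually.of_forall fun s => ?_)
          simp only [he]
          by_cases hs : s ∈ Set.Icc (0:ℝ) (1 - ∑ i, u i)
          · rw [Set.indicator_of_mem hs, Set.indicator_of_mem ((mem_simpSet_insertNth j s u).mpr ⟨hu, hs⟩)]
          · rw [Set.indicator_of_notMem hs, Set.indicator_of_notMem]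
            rw [mem_simpSet_insertNth]
            tauto
        · rw [Set.indicator_of_notMem hu]
          have : ∀ s : ℝ, Set.indicator (SimpSet (k + 1)) F (e (s, u)) = 0 := by
            intro s
            rw [he, Set.indicator_of_notMem]
            rw [mem_simpSet_insertNth]
            tauto
          simp [this]
    _ = ∫ u in SimpSet k, ∫ s in Set.Icc (0:ℝ) (1 - ∑ i, u i), F (j.insertNth s u) :=
        integral_indicator (simpSet_meas k)

lemma sum_insertNth {k : ℕ} (j : Fin (k + 1)) (s : ℝ) (u : Fin k → ℝ) :
    ∑ i, j.insertNth s u i = s + ∑ i, u i := by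
  rw [Fin.sum_univ_succAbove _ j]; simp

lemma simpSet_J : ∀ (k r : ℕ),
    ∫ t in SimpSet k, (1 - ∑ i, t i) ^ r = (r.factorial : ℝ) / (r + k).factorial := by
  intro k
  induction k with
  | zero =>
    intro r
    have huniv : SimpSet 0 = Set.univ := by
      ext t; simp [SimpSet]
    have hvol : (volume : Measure (Fin 0 → ℝ)) Set.univ = 1 := by
      have : (Set.univ : Set (Fin 0 → ℝ)) = Set.pi Set.univ (fun _ => Set.univ) := by simp
      rw [this, volume_pi, Measure.pi_pi]
      simp
    rw [huniv]
    have : ∀ t : Fin 0 → ℝ, (1 - ∑ i, t i) ^ r = 1 := by intro t; simp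
    rw [setIntegral_congr_fun MeasurableSet.univ (fun t _ => this t)]
    rw [setIntegral_const, measureReal_def, hvol]
    have : (r.factorial : ℝ) ≠ 0 := by positivity
    simp [div_self this]
  | succ k ih =>
    intro r
    have hcont : ContinuousOn (fun t : Fin (k + 1) → ℝ => (1 - ∑ i, t i) ^ r) (SimpSet (k + 1)) :=
      (Continuous.pow (by continuity) r).continuousOn
    rw [simplex_slice 0 _ (hcont.integrableOn_compact (simpSet_compact _))]
    have hinner : ∀ u ∈ SimpSet k,
        ∫ s in Set.Icc (0:ℝ) (1 - ∑ i, u i), (1 - ∑ i, (0 : Fin (k+1)).insertNth s u i) ^ r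
          = (1 - ∑ i, u i) ^ (r + 1) / (r + 1) := by
      intro u hu
      have hm : (0:ℝ) ≤ 1 - ∑ i, u i := by
        have := hu.2; linarith
      have : ∀ s : ℝ, (1 - ∑ i, (0 : Fin (k+1)).insertNth s u i) ^ r
          = ((1 - ∑ i, u i) - s) ^ r := by
        intro s; rw [sum_insertNth]; ring_nf
      simp_rw [this]
      rw [integral_Icc_eq_integral_Ioc, ← intervalIntegral.integral_of_le hm]
      rw [intervalIntegral.integral_comp_sub_left (fun x => x ^ r) (1 - ∑ i, u i)]
      simp only [sub_self, sub_zero]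
      rw [integral_pow]
      simp
    rw [setIntegral_congr_fun (simpSet_meas k) hinner]
    rw [integral_div, ih (r + 1)]
    rw [show r + 1 + k = r + (k + 1) by omega]
    push_cast [Nat.factorial_succ]
    have h1 : ((r:ℝ) + 1) ≠ 0 := by positivity
    have h2 : ((r + (k+1)).factorial : ℝ) ≠ 0 := by positivity
    field_simp


lemma itdAnalytic {U : Set ℂ} {g : ℂ → ℂ} (hg : AnalyticOnNhd ℂ g U) (n : ℕ) :
    AnalyticOnNhd ℂ (iteratedDeriv n g) U := by
  induction n with
  | zero => simpa [iteratedDeriv_zero] using hg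
  | succ n ih => rw [iteratedDeriv_succ]; exact ih.deriv

lemma convex_mem_U {U : Set ℂ} (hUconv : Convex ℝ U) {m : ℕ} (z : Fin (m + 1) → ℂ)
    (hz : ∀ i, z i ∈ U) {t : Fin m → ℝ} (ht : t ∈ SimpSet m) :
    z 0 + ∑ i, (t i : ℂ) * (z i.succ - z 0) ∈ U := by
  have hrw : z 0 + ∑ i, (t i : ℂ) * (z i.succ - z 0)
      = ∑ i : Fin (m + 1), (Fin.cons (1 - ∑ i, t i) t : Fin (m+1) → ℝ) i • z i := by
    rw [Fin.sum_univ_succ]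
    simp only [Fin.cons_zero, Fin.cons_succ, Complex.real_smul]
    push_cast
    rw [Finset.sum_congr rfl (fun i _ => mul_sub ((t i : ℂ)) _ _), Finset.sum_sub_distrib,
      ← Finset.sum_mul]
    ring
  rw [hrw]
  refine hUconv.sum_mem (fun i _ => ?_) ?_ (fun i _ => hz i)
  · rcases Fin.eq_zero_or_eq_succ i with rfl | ⟨i', rfl⟩
    · simp only [Fin.cons_zero]; have := ht.2; linarith
    · simp only [Fin.cons_succ]; exact ht.1 i'
  · rw [Fin.sum_univ_succ]
    simp only [Fin.cons_zero, Fin.cons_succ]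
    ring

lemma key {U : Set ℂ} (hU : IsOpen U) (hUconv : Convex ℝ U) {g : ℂ → ℂ}
    (hg : AnalyticOnNhd ℂ g U) :
    ∀ (k : ℕ) (z : Fin (k + 1) → ℂ), (∀ i, z i ∈ U) →
      (∀ μ : ℂ, ∀ j < (Finset.univ.filter (fun i => z i = μ)).card, iteratedDeriv j g μ = 0) →
      ∫ t in SimpSet k, iteratedDeriv k g (z 0 + ∑ i, (t i : ℂ) * (z i.succ - z 0)) = 0 := by
  intro k
  induction k with
  | zero =>
    intro z hz hzero
    have hcard : 0 < (Finset.univ.filter (fun i => z i = z 0)).card :=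
      Finset.card_pos.mpr ⟨0, by simp⟩
    have h0 : g (z 0) = 0 := by simpa using hzero (z 0) 0 hcard
    have heq : ∀ t ∈ SimpSet 0,
        iteratedDeriv 0 g (z 0 + ∑ i, (t i : ℂ) * (z i.succ - z 0)) = 0 := by
      intro t _; simp [h0]
    rw [setIntegral_congr_fun (simpSet_meas 0) heq]
    simp
  | succ k ih =>
    intro z hz hzero
    by_cases hall : ∀ i : Fin (k + 1), z i.succ = z 0
    · have huniv : Finset.univ.filter (fun i : Fin (k+2) => z i = z 0) = Finset.univ := by
        refine Finset.eq_univ_of_forall fun i => ?_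
        simp only [Finset.mem_filter, Finset.mem_univ, true_and]
        rcases Fin.eq_zero_or_eq_succ i with rfl | ⟨i', rfl⟩
        · rfl
        · exact hall i'
      have hcard : k + 1 < (Finset.univ.filter (fun i : Fin (k+2) => z i = z 0)).card := by
        rw [huniv, Finset.card_univ, Fintype.card_fin]; omega
      have hval : iteratedDeriv (k+1) g (z 0) = 0 := hzero (z 0) (k+1) hcard
      have heq : ∀ t ∈ SimpSet (k+1),
          iteratedDeriv (k+1) g (z 0 + ∑ i, (t i : ℂ) * (z i.succ - z 0)) = 0 := by
        intro t _
        have hsz : ∑ i, (t i : ℂ) * (z i.succ - z 0) = 0 :=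
          Finset.sum_eq_zero fun i _ => by rw [hall i]; ring
        rw [hsz, add_zero, hval]
      rw [setIntegral_congr_fun (simpSet_meas _) heq]
      simp
    · push_neg at hall
      obtain ⟨j, hj⟩ := hall
      set d : ℂ := z j.succ - z 0 with hd_def
      have hd : d ≠ 0 := sub_ne_zero.mpr hj
      set c : (Fin k → ℝ) → ℂ :=
        fun u => z 0 + ∑ i, (u i : ℂ) * (z ((j.succAbove i).succ) - z 0) with hc_def
      have hA : ∀ (s : ℝ) (u : Fin k → ℝ),
          z 0 + ∑ i, ((Fin.insertNth (α := fun _ => ℝ) j s u i : ℝ) : ℂ) * (z i.succ - z 0) = c u + (s : ℂ) * d := by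
        intro s u
        rw [Fin.sum_univ_succAbove (fun i => ((Fin.insertNth (α := fun _ => ℝ) j s u i : ℝ) : ℂ) * (z i.succ - z 0)) j]
        simp only [Fin.insertNth_apply_same, Fin.insertNth_apply_succAbove, hc_def, hd_def]
        ring
      have hmemU : ∀ (s : ℝ) (u : Fin k → ℝ), j.insertNth s u ∈ SimpSet (k+1) →
          c u + (s : ℂ) * d ∈ U := by
        intro s u h
        rw [← hA]
        exact convex_mem_U hUconv z hz h
      have hFcont : ContinuousOn (fun t : Fin (k+1) → ℝ =>
          iteratedDeriv (k+1) g (z 0 + ∑ i, (t i : ℂ) * (z i.succ - z 0))) (SimpSet (k+1)) := by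
        intro t ht
        have hpt := convex_mem_U hUconv z hz ht
        have hin : Continuous (fun t : Fin (k+1) → ℝ =>
            z 0 + ∑ i, (t i : ℂ) * (z i.succ - z 0)) :=
          continuous_const.add (continuous_finset_sum _ fun i _ =>
            (Complex.continuous_ofReal.comp (continuous_apply i)).mul continuous_const)
        have hcomp : ContinuousAt ((iteratedDeriv (k+1) g) ∘ (fun t : Fin (k+1) → ℝ =>
            z 0 + ∑ i, (t i : ℂ) * (z i.succ - z 0))) t :=
          ContinuousAt.comp (((itdAnalytic hg (k+1)) _ hpt).continuousAt) hin.continuousAt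
        exact hcomp.continuousWithinAt
      rw [simplex_slice j _ (hFcont.integrableOn_compact (simpSet_compact _))]
      have hinner : ∀ u ∈ SimpSet k,
          (∫ s in Set.Icc (0:ℝ) (1 - ∑ i, u i),
            iteratedDeriv (k+1) g (z 0 + ∑ i, ((Fin.insertNth (α := fun _ => ℝ) j s u i : ℝ) : ℂ) * (z i.succ - z 0)))
          = d⁻¹ * (iteratedDeriv k g (c u + ((1 - ∑ i, u i : ℝ) : ℂ) * d)
              - iteratedDeriv k g (c u)) := by
        intro u hu
        set m : ℝ := 1 - ∑ i, u i with hm_def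
        have hm0 : 0 ≤ m := by have := hu.2; rw [hm_def]; linarith
        have hmemIcc : ∀ s ∈ Set.uIcc (0:ℝ) m, c u + (s:ℂ) * d ∈ U := by
          intro s hs
          rw [Set.uIcc_of_le hm0] at hs
          exact hmemU s u ((mem_simpSet_insertNth j s u).mpr ⟨hu, hs⟩)
        have hderiv : ∀ s ∈ Set.uIcc (0:ℝ) m,
            HasDerivAt (fun s : ℝ => iteratedDeriv k g (c u + (s:ℂ) * d))
              (d * iteratedDeriv (k+1) g (c u + (s:ℂ) * d)) s := by
          intro s hs
          have h1 : HasDerivAt (fun x : ℂ => c u + x * d) d (s : ℂ) := by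
            simpa using ((hasDerivAt_id ((s:ℝ):ℂ)).mul_const d).const_add (c u)
          have h2 : HasDerivAt (iteratedDeriv k g)
              (iteratedDeriv (k+1) g (c u + (s:ℂ) * d)) (c u + (s:ℂ) * d) := by
            rw [iteratedDeriv_succ]
            exact (((itdAnalytic hg k) _ (hmemIcc s hs)).differentiableAt).hasDerivAt
          have h3 := (h2.comp ((s:ℝ):ℂ) h1).comp_ofReal
          simpa [Function.comp, mul_comm] using h3
        have hcont' : ContinuousOn (fun s : ℝ => d * iteratedDeriv (k+1) g (c u + (s:ℂ) * d))
            (Set.uIcc (0:ℝ) m) := by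
          intro s hs
          have hin : Continuous (fun s : ℝ => c u + (s:ℂ) * d) :=
            continuous_const.add (Complex.continuous_ofReal.mul continuous_const)
          have hca : ContinuousAt ((iteratedDeriv (k+1) g) ∘ (fun s : ℝ => c u + (s:ℂ) * d)) s :=
            ContinuousAt.comp (((itdAnalytic hg (k+1)) _ (hmemIcc s hs)).continuousAt)
              hin.continuousAt
          exact (continuousAt_const.mul hca).continuousWithinAt
        have hftc := intervalIntegral.integral_eq_sub_of_hasDerivAt hderiv
          (hcont'.intervalIntegrable)
        rw [intervalIntegral.integral_const_mul] at hftc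
        have hgoal : (∫ s in Set.Icc (0:ℝ) m,
            iteratedDeriv (k+1) g (z 0 + ∑ i, ((Fin.insertNth (α := fun _ => ℝ) j s u i : ℝ) : ℂ) * (z i.succ - z 0)))
            = ∫ s in (0:ℝ)..m, iteratedDeriv (k+1) g (c u + (s:ℂ) * d) := by
          rw [integral_Icc_eq_integral_Ioc, ← intervalIntegral.integral_of_le hm0]
          exact intervalIntegral.integral_congr (fun s _ => congrArg (iteratedDeriv (k+1) g) (hA s u))
        rw [hgoal, eq_inv_mul_iff_mul_eq₀ hd, hftc]
        norm_num
      rw [setIntegral_congr_fun (simpSet_meas k) hinner]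
      -- new node systems
      set π₁ : Fin (k+1) → Fin (k+2) :=
        Fin.cons j.succ (fun i' : Fin k => (j.succAbove i').succ) with hπ₁_def
      set z₁ : Fin (k+1) → ℂ := fun i => z (π₁ i) with hz₁_def
      set z₂ : Fin (k+1) → ℂ := fun i => z ((j.succ).succAbove i) with hz₂_def
      have hπ₁ : Function.Injective π₁ := by
        rw [hπ₁_def]
        intro x y hxy
        induction x using Fin.cases with
        | zero =>
          induction y using Fin.cases with
          | zero => rfl
          | succ y' =>
            exfalso
            rw [Fin.cons_zero, Fin.cons_succ, ← Fin.succ_succAbove_succ] at hxy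
            exact (Fin.succAbove_ne _ _) hxy.symm
        | succ x' =>
          induction y using Fin.cases with
          | zero =>
            exfalso
            rw [Fin.cons_zero, Fin.cons_succ, ← Fin.succ_succAbove_succ] at hxy
            exact (Fin.succAbove_ne _ _) hxy
          | succ y' =>
            rw [Fin.cons_succ, Fin.cons_succ] at hxy
            have := Fin.succAbove_right_injective (p := j) (Fin.succ_injective _ hxy)
            rw [this]
      have hπ₂ : Function.Injective ((j.succ).succAbove) := Fin.succAbove_right_injective
      have hcount : ∀ (π : Fin (k+1) → Fin (k+2)), Function.Injective π → ∀ μ : ℂ,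
          (Finset.univ.filter (fun i => z (π i) = μ)).card
            ≤ (Finset.univ.filter (fun i => z i = μ)).card := by
        intro π hπ μ
        apply Finset.card_le_card_of_injOn π
        · intro i hi
          simp only [Finset.coe_filter, Finset.mem_coe, Finset.mem_filter, Finset.mem_univ, true_and, Set.mem_setOf_eq] at hi ⊢
          exact hi
        · exact hπ.injOn
      have hB : ∀ u : Fin k → ℝ, c u + ((1 - ∑ i, u i : ℝ) : ℂ) * d
          = z₁ 0 + ∑ i, (u i : ℂ) * (z₁ i.succ - z₁ 0) := by
        intro u
        simp only [hz₁_def, hπ₁_def, Fin.cons_zero, Fin.cons_succ, hc_def, hd_def]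
        push_cast
        rw [Finset.sum_congr rfl (fun i (_ : i ∈ Finset.univ) =>
            mul_sub ((u i : ℂ)) (z ((j.succAbove i).succ)) (z 0)),
          Finset.sum_congr rfl (fun i (_ : i ∈ Finset.univ) =>
            mul_sub ((u i : ℂ)) (z ((j.succAbove i).succ)) (z j.succ))]
        rw [Finset.sum_sub_distrib, Finset.sum_sub_distrib, ← Finset.sum_mul, ← Finset.sum_mul]
        ring
      have hC : ∀ u : Fin k → ℝ, c u = z₂ 0 + ∑ i, (u i : ℂ) * (z₂ i.succ - z₂ 0) := by
        intro u
        have h0 : (j.succ).succAbove 0 = 0 := by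
          rw [Fin.succAbove_of_castSucc_lt]
          · rfl
          · simp [Fin.castSucc_zero, Fin.succ_pos]
        simp only [hz₂_def, hc_def, Fin.succ_succAbove_succ, h0]
      have hI₁ : (∫ u in SimpSet k,
          iteratedDeriv k g (c u + ((1 - ∑ i, u i : ℝ) : ℂ) * d)) = 0 := by
        rw [setIntegral_congr_fun (simpSet_meas k) (fun u (_ : u ∈ SimpSet k) => congrArg (iteratedDeriv k g) (hB u))]
        exact ih z₁ (fun i => hz _)
          (fun μ jj hjj => hzero μ jj (lt_of_lt_of_le hjj (hcount _ hπ₁ μ)))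
      have hI₂ : (∫ u in SimpSet k, iteratedDeriv k g (c u)) = 0 := by
        rw [setIntegral_congr_fun (simpSet_meas k) (fun u (_ : u ∈ SimpSet k) => congrArg (iteratedDeriv k g) (hC u))]
        exact ih z₂ (fun i => hz _)
          (fun μ jj hjj => hzero μ jj (lt_of_lt_of_le hjj (hcount _ hπ₂ μ)))
      -- integrability of the two pieces
      have hcont₁ : ContinuousOn (fun u : Fin k → ℝ =>
          iteratedDeriv k g (c u + ((1 - ∑ i, u i : ℝ) : ℂ) * d)) (SimpSet k) := by
        intro u hu
        have hm0 : (0:ℝ) ≤ 1 - ∑ i, u i := by have := hu.2; linarith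
        have hpt : c u + ((1 - ∑ i, u i : ℝ) : ℂ) * d ∈ U :=
          hmemU _ u ((mem_simpSet_insertNth j _ u).mpr ⟨hu, Set.mem_Icc.mpr ⟨hm0, le_rfl⟩⟩)
        have hin : Continuous (fun u : Fin k → ℝ =>
            c u + ((1 - ∑ i, u i : ℝ) : ℂ) * d) := by
          apply Continuous.add
          · rw [hc_def]
            exact continuous_const.add (continuous_finset_sum _ fun i _ =>
              (Complex.continuous_ofReal.comp (continuous_apply i)).mul continuous_const)
          · exact (Complex.continuous_ofReal.comp (continuous_const.sub
              (continuous_finset_sum _ fun i _ => continuous_apply i))).mul continuous_const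
        have hcomp : ContinuousAt ((iteratedDeriv k g) ∘ (fun u : Fin k → ℝ =>
            c u + ((1 - ∑ i, u i : ℝ) : ℂ) * d)) u :=
          ContinuousAt.comp (((itdAnalytic hg k) _ hpt).continuousAt) hin.continuousAt
        exact hcomp.continuousWithinAt
      have hcont₂ : ContinuousOn (fun u : Fin k → ℝ => iteratedDeriv k g (c u)) (SimpSet k) := by
        intro u hu
        have hm0 : (0:ℝ) ≤ 1 - ∑ i, u i := by have := hu.2; linarith
        have hpt : c u + ((0:ℝ) : ℂ) * d ∈ U :=
          hmemU _ u ((mem_simpSet_insertNth j _ u).mpr ⟨hu, Set.mem_Icc.mpr ⟨le_rfl, hm0⟩⟩)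
        rw [Complex.ofReal_zero, zero_mul, add_zero] at hpt
        have hin : Continuous c := by
          rw [hc_def]
          exact continuous_const.add (continuous_finset_sum _ fun i _ =>
            (Complex.continuous_ofReal.comp (continuous_apply i)).mul continuous_const)
        have hcomp : ContinuousAt ((iteratedDeriv k g) ∘ c) u :=
          ContinuousAt.comp (((itdAnalytic hg k) _ hpt).continuousAt) hin.continuousAt
        exact hcomp.continuousWithinAt
      have hint₁ := hcont₁.integrableOn_compact (μ := volume) (simpSet_compact k)
      have hint₂ := hcont₂.integrableOn_compact (μ := volume) (simpSet_compact k)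
      calc (∫ u in SimpSet k, d⁻¹ * (iteratedDeriv k g (c u + ((1 - ∑ i, u i : ℝ) : ℂ) * d)
              - iteratedDeriv k g (c u)))
          = d⁻¹ * ∫ u in SimpSet k, (iteratedDeriv k g (c u + ((1 - ∑ i, u i : ℝ) : ℂ) * d)
              - iteratedDeriv k g (c u)) := by rw [integral_const_mul]
        _ = d⁻¹ * ((∫ u in SimpSet k, iteratedDeriv k g (c u + ((1 - ∑ i, u i : ℝ) : ℂ) * d))
              - ∫ u in SimpSet k, iteratedDeriv k g (c u)) := by rw [integral_sub hint₁ hint₂]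
        _ = 0 := by rw [hI₁, hI₂]; ring


lemma analyticAt_eval (p : Polynomial ℂ) (z : ℂ) : AnalyticAt ℂ (fun x : ℂ => p.eval x) z := by
  have h : AnalyticAt ℂ (id : ℂ → ℂ) z := analyticAt_id
  have := h.aeval_polynomial p
  simpa using this

lemma itder_poly (p : Polynomial ℂ) (n : ℕ) :
    iteratedDeriv n (fun w => p.eval w) = fun w => (Polynomial.derivative^[n] p).eval w := by
  induction n with
  | zero => simp
  | succ n ih =>
    rw [iteratedDeriv_succ, ih, Function.iterate_succ_apply']
    funext w
    exact Polynomial.deriv (p := Polynomial.derivative^[n] p) (x := w)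

lemma iter_der_sum {k : ℕ} (a : Fin (k + 1) → ℂ) :
    Polynomial.derivative^[k] (∑ i : Fin (k + 1), Polynomial.C (a i) * Polynomial.X ^ (i : ℕ))
      = Polynomial.C ((k.factorial : ℂ) * a (Fin.last k)) := by
  rw [Polynomial.iterate_derivative_sum]
  rw [Finset.sum_eq_single (Fin.last k)]
  · rw [Polynomial.iterate_derivative_C_mul, Polynomial.iterate_derivative_X_pow_eq_smul]
    simp [Fin.val_last, Nat.descFactorial_self, mul_comm]
  · intro i _ hi
    rw [Polynomial.iterate_derivative_C_mul, Polynomial.iterate_derivative_X_pow_eq_smul]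
    have : (i : ℕ) < k := by
      rcases lt_or_eq_of_le (Nat.lt_succ_iff.mp i.2) with h | h
      · exact h
      · exact absurd (Fin.ext h) hi
    rw [Nat.descFactorial_eq_zero_iff_lt.mpr this]
    simp
  · simp

lemma rootmult {k : ℕ} (lam : Fin (k + 1) → ℂ) (μ : ℂ) :
    (∏ i, (Polynomial.X - Polynomial.C (lam i))).rootMultiplicity μ
      = (Finset.univ.filter (fun i => lam i = μ)).card := by
  rw [← Polynomial.count_roots]
  rw [Polynomial.roots_prod _ _ (Finset.prod_ne_zero_iff.mpr
    (fun i _ => Polynomial.X_sub_C_ne_zero (lam i)))]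
  simp only [Polynomial.roots_X_sub_C]
  rw [Multiset.bind_singleton]  -- univ.val.bind (fun i => {lam i}) = univ.val.map lam ?
  rw [Multiset.count_map]
  rw [show Multiset.filter (fun a => μ = lam a) Finset.univ.val
      = Multiset.filter (fun a => lam a = μ) Finset.univ.val from
    Multiset.filter_congr (fun x _ => eq_comm)]
  rfl


lemma itd_sub {U : Set ℂ} (hU : IsOpen U) {f h : ℂ → ℂ} (hf : AnalyticOnNhd ℂ f U)
    (hh : AnalyticOnNhd ℂ h U) :
    ∀ (n : ℕ), ∀ x ∈ U, iteratedDeriv n (fun w => f w - h w) x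
      = iteratedDeriv n f x - iteratedDeriv n h x := by
  intro n
  induction n with
  | zero => intro x _; simp
  | succ n ih =>
    intro x hx
    rw [iteratedDeriv_succ, iteratedDeriv_succ, iteratedDeriv_succ]
    have hev : deriv (iteratedDeriv n fun w => f w - h w) x
        = deriv (fun y => iteratedDeriv n f y - iteratedDeriv n h y) x :=
      Filter.EventuallyEq.deriv_eq
        (Filter.eventuallyEq_of_mem (hU.mem_nhds hx) (fun y hy => ih y hy))
    rw [hev, deriv_fun_sub ((itdAnalytic hf n) x hx).differentiableAt
      ((itdAnalytic hh n) x hx).differentiableAt]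

lemma simpSet_volume (k : ℕ) : (volume (SimpSet k)).toReal = (k.factorial : ℝ)⁻¹ := by
  have h := simpSet_J k 0
  have h1 : ∀ t ∈ SimpSet k, (1 - ∑ i, t i) ^ (0:ℕ) = (1:ℝ) := fun t _ => pow_zero _
  rw [setIntegral_congr_fun (simpSet_meas k) h1, setIntegral_const, smul_eq_mul, mul_one] at h
  rw [← measureReal_def, h]
  norm_num

lemma integrand_cont {U : Set ℂ} (hUconv : Convex ℝ U) {g : ℂ → ℂ}
    (hg : AnalyticOnNhd ℂ g U) {m : ℕ} (n : ℕ) (z : Fin (m + 1) → ℂ) (hz : ∀ i, z i ∈ U) :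
    ContinuousOn (fun t : Fin m → ℝ =>
      iteratedDeriv n g (z 0 + ∑ i, (t i : ℂ) * (z i.succ - z 0))) (SimpSet m) := by
  intro t ht
  have hpt := convex_mem_U hUconv z hz ht
  have hin : Continuous (fun t : Fin m → ℝ =>
      z 0 + ∑ i, (t i : ℂ) * (z i.succ - z 0)) :=
    continuous_const.add (continuous_finset_sum _ fun i _ =>
      (Complex.continuous_ofReal.comp (continuous_apply i)).mul continuous_const)
  have hcomp : ContinuousAt ((iteratedDeriv n g) ∘ (fun t : Fin m → ℝ =>
      z 0 + ∑ i, (t i : ℂ) * (z i.succ - z 0))) t :=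
    ContinuousAt.comp (((itdAnalytic hg n) _ hpt).continuousAt) hin.continuousAt
  exact hcomp.continuousWithinAt


lemma divDiff_polyval {k : ℕ} (a : Fin (k + 1) → ℂ) (lam : Fin (k + 1) → ℂ) :
    divDiff (fun w => Polynomial.eval w
        (∑ i : Fin (k + 1), Polynomial.C (a i) * Polynomial.X ^ (i : ℕ))) k lam
      = a (Fin.last k) := by
  have hdd : divDiff (fun w => Polynomial.eval w
        (∑ i : Fin (k + 1), Polynomial.C (a i) * Polynomial.X ^ (i : ℕ))) k lam
      = ∫ t in SimpSet k, iteratedDeriv k (fun w => Polynomial.eval w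
        (∑ i : Fin (k + 1), Polynomial.C (a i) * Polynomial.X ^ (i : ℕ)))
        (lam 0 + ∑ i, (t i : ℂ) * (lam i.succ - lam 0)) := rfl
  have hconst : ∀ w : ℂ, iteratedDeriv k (fun w => Polynomial.eval w
      (∑ i : Fin (k + 1), Polynomial.C (a i) * Polynomial.X ^ (i : ℕ))) w
      = (k.factorial : ℂ) * a (Fin.last k) := by
    intro w
    rw [itder_poly, iter_der_sum]
    simp
  rw [hdd, setIntegral_congr_fun (simpSet_meas k) (fun t _ => hconst _),
    setIntegral_const, measureReal_def, simpSet_volume, Complex.real_smul]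
  have hne : (k.factorial : ℂ) ≠ 0 := Nat.cast_ne_zero.mpr (Nat.factorial_ne_zero k)
  push_cast
  field_simp


theorem tridiag_corner_entry {k : ℕ} (T : Matrix (Fin (k + 1)) (Fin (k + 1)) ℂ)
    (htri : ∀ i j : Fin (k + 1), ((j : ℕ) + 1 < (i : ℕ) ∨ (i : ℕ) + 1 < (j : ℕ)) → T i j = 0)
    (hsub : ∀ j : Fin k, T j.succ j.castSucc ≠ 0)
    (lam : Fin (k + 1) → ℂ)
    (hlam : T.charpoly = ∏ i, (Polynomial.X - Polynomial.C (lam i)))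
    (f : ℂ → ℂ) (U : Set ℂ) (hU : IsOpen U) (hUconv : Convex ℝ U)
    (hspec : ∀ i, lam i ∈ U) (hf : ∀ w ∈ U, AnalyticAt ℂ f w)
    (a : Fin (k + 1) → ℂ) (fT : Matrix (Fin (k + 1)) (Fin (k + 1)) ℂ)
    (hfT : fT = ∑ i : Fin (k + 1), a i • T ^ (i : ℕ))
    (hinterp : ∀ μ : ℂ, ∀ j < T.charpoly.rootMultiplicity μ,
      iteratedDeriv j
        (fun w => Polynomial.eval w (∑ i : Fin (k + 1), Polynomial.C (a i) * Polynomial.X ^ (i : ℕ))) μ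
        = iteratedDeriv j f μ) :
    fT (Fin.last k) 0 = a (Fin.last k) * (T ^ k) (Fin.last k) 0
    ∧ fT (Fin.last k) 0 = divDiff f k lam * ∏ j : Fin k, T j.succ j.castSucc := by
  have hpart1 : fT (Fin.last k) 0 = a (Fin.last k) * (T ^ k) (Fin.last k) 0 := by
    rw [hfT]
    simp only [Matrix.sum_apply, Matrix.smul_apply, smul_eq_mul]
    rw [Finset.sum_eq_single (Fin.last k)]
    · rw [Fin.val_last]
    · intro i _ hi
      have hik : (i : ℕ) < k := by
        rcases lt_or_eq_of_le (Nat.lt_succ_iff.mp i.2) with h | h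
        · exact h
        · exact absurd (Fin.ext (by rw [h, Fin.val_last])) hi
      rw [band0 T htri (i : ℕ) (Fin.last k) 0 (by simp [Fin.val_last]; omega), mul_zero]
    · intro h; exact absurd (Finset.mem_univ _) h
  have hprod : (T ^ k) (Fin.last k) 0 = ∏ j : Fin k, T j.succ j.castSucc := by
    have hb := bandProd T htri k 0 (by simp)
    have hidx : (⟨((0 : Fin (k+1)) : ℕ) + k, by simp⟩ : Fin (k + 1)) = Fin.last k :=
      Fin.ext (by simp)
    rw [hidx] at hb
    rw [hb]
    refine Finset.prod_congr rfl fun m _ => ?_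
    congr 1 <;> exact Fin.ext (by simp)
  -- analytic setup
  set p : Polynomial ℂ := ∑ i : Fin (k + 1), Polynomial.C (a i) * Polynomial.X ^ (i : ℕ)
    with hp_def
  have hfA : AnalyticOnNhd ℂ f U := hf
  have hpA : AnalyticOnNhd ℂ (fun w => Polynomial.eval w p) U :=
    fun x _ => analyticAt_eval p x
  have hgA : AnalyticOnNhd ℂ (fun w => f w - Polynomial.eval w p) U :=
    fun x hx => (hf x hx).sub (analyticAt_eval p x)
  have hzero : ∀ μ : ℂ, ∀ j < (Finset.univ.filter (fun i => lam i = μ)).card,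
      iteratedDeriv j (fun w => f w - Polynomial.eval w p) μ = 0 := by
    intro μ j hj
    have hcard : 0 < (Finset.univ.filter (fun i => lam i = μ)).card :=
      lt_of_le_of_lt (Nat.zero_le _) hj
    obtain ⟨i, hi⟩ := Finset.card_pos.mp hcard
    have hiμ : lam i = μ := (Finset.mem_filter.mp hi).2
    have hμU : μ ∈ U := hiμ ▸ hspec i
    have hj' : j < T.charpoly.rootMultiplicity μ := by
      rw [hlam, rootmult]; exact hj
    have hint := hinterp μ j hj'
    rw [itd_sub hU hfA hpA j μ hμU, hint, sub_self]
  have hkey := key hU hUconv hgA k lam hspec hzero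
  have hIf := (integrand_cont hUconv hfA k lam hspec).integrableOn_compact
    (μ := volume) (simpSet_compact k)
  have hIp := (integrand_cont hUconv hpA k lam hspec).integrableOn_compact
    (μ := volume) (simpSet_compact k)
  have hdd : ∀ g : ℂ → ℂ, divDiff g k lam = ∫ t in SimpSet k,
      iteratedDeriv k g (lam 0 + ∑ i, (t i : ℂ) * (lam i.succ - lam 0)) := fun g => rfl
  have hsubdd : divDiff f k lam - divDiff (fun w => Polynomial.eval w p) k lam = 0 := by
    rw [hdd f, hdd (fun w => Polynomial.eval w p), ← integral_sub hIf hIp]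
    rw [setIntegral_congr_fun (simpSet_meas k) (fun t ht =>
      (itd_sub hU hfA hpA k _ (convex_mem_U hUconv lam hspec ht)).symm)]
    exact hkey
  have hdiv : divDiff f k lam = a (Fin.last k) := by
    have := divDiff_polyval a lam
    rw [← hp_def] at this
    rw [sub_eq_zero] at hsubdd
    rw [hsubdd, this]
  refine ⟨hpart1, ?_⟩
  rw [hpart1, hprod, hdiv]
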